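/- Let B be a commutative ℚ-algebra and fix r ∈ ℕ. Suppose given elements f, f' ∈ B and sequences (c_k), (c'_k), (s_k), (s'_k), (s̃_k) in B (k ≥ 0) with c_0=c'_0=s_0=s'_0=s̃_0=1, satisfying: (a) Σ_{j=0}^k c_j s_{k-j} = 0 and Σ_{j=0}^k c'_j s'_{k-j} = 0 for all k ≥ 1; (b) s̃_k = Σ_{j=0}^k (-1)^{k-j} s_j s'_{k-j} for all k; (c) f + f' = (-1)^r. Define W_0 = f, W'_0 = f', and recursively W_ν = s_ν f + Σ_{j=1}^{ν} W_{ν-j}·((-1)^r c_j f - (-1)^{r+j} c'_j f - c_j) and W'_ν = s'_ν f' + Σ_{j=1}^{ν} W'_{ν-j}·((-1)^r c'_j f' - (-1)^{r+j} c_j f' - c'_j). Then for all ν ≥ 0: W_ν - (-1)^{ν+1} W'_ν = (-1)^r s̃_ν. -/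

import Mathlib

open PowerSeries Finset

private lemma range_split (B : Type*) [CommRing B] (g : ℕ → B) (ν : ℕ) :
    ∑ j ∈ Finset.range (ν + 1), g j = g 0 + ∑ j ∈ Finset.Icc 1 ν, g j := by
  have h : Finset.Icc 1 ν = Finset.Ico 1 (ν + 1) := by
    rw [Finset.Ico_add_one_right_eq_Icc]
  rw [h, Finset.sum_Ico_eq_sum_range, Finset.sum_range_succ']
  simp [add_comm]

theorem stmt_10 (B : Type*) [CommRing B] [Algebra ℚ B] (r : ℕ) (f f' : B)
    (c c' s s' st : ℕ → B)
    (hc0 : c 0 = 1) (hc'0 : c' 0 = 1) (hs0 : s 0 = 1) (hs'0 : s' 0 = 1) (hst0 : st 0 = 1)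
    (hcs : ∀ k, 1 ≤ k → ∑ j ∈ Finset.range (k + 1), c j * s (k - j) = 0)
    (hcs' : ∀ k, 1 ≤ k → ∑ j ∈ Finset.range (k + 1), c' j * s' (k - j) = 0)
    (hst : ∀ k, st k = ∑ j ∈ Finset.range (k + 1), (-1 : B) ^ (k - j) * s j * s' (k - j))
    (hff' : f + f' = (-1 : B) ^ r)
    (W W' : ℕ → B)
    (hW0 : W 0 = f) (hW'0 : W' 0 = f')
    (hW : ∀ ν, 1 ≤ ν → W ν = s ν * f + ∑ j ∈ Finset.Icc 1 ν,
      W (ν - j) * ((-1 : B) ^ r * c j * f - (-1 : B) ^ (r + j) * c' j * f - c j))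
    (hW' : ∀ ν, 1 ≤ ν → W' ν = s' ν * f' + ∑ j ∈ Finset.Icc 1 ν,
      W' (ν - j) * ((-1 : B) ^ r * c' j * f' - (-1 : B) ^ (r + j) * c j * f' - c' j)) :
    ∀ ν, W ν - (-1 : B) ^ (ν + 1) * W' ν = (-1 : B) ^ r * st ν := by
  -- power series setup
  set C : B⟦X⟧ := PowerSeries.mk c with hC
  set C' : B⟦X⟧ := PowerSeries.mk c' with hC'
  set S : B⟦X⟧ := PowerSeries.mk s with hS
  set S' : B⟦X⟧ := PowerSeries.mk s' with hS'
  set St : B⟦X⟧ := PowerSeries.mk st with hSt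
  have hCS : C * S = 1 := by
    ext n
    rw [PowerSeries.coeff_mul, Finset.Nat.sum_antidiagonal_eq_sum_range_succ_mk]
    simp only [hC, hS, coeff_mk, PowerSeries.coeff_one]
    rcases Nat.eq_zero_or_pos n with h | h
    · subst h; simp [hc0, hs0]
    · rw [hcs n h, if_neg (by omega)]
  have hCS' : C' * S' = 1 := by
    ext n
    rw [PowerSeries.coeff_mul, Finset.Nat.sum_antidiagonal_eq_sum_range_succ_mk]
    simp only [hC', hS', coeff_mk, PowerSeries.coeff_one]
    rcases Nat.eq_zero_or_pos n with h | h
    · subst h; simp [hc'0, hs'0]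
    · rw [hcs' n h, if_neg (by omega)]
  have hStm : St = S * rescale (-1) S' := by
    ext n
    rw [PowerSeries.coeff_mul, Finset.Nat.sum_antidiagonal_eq_sum_range_succ_mk]
    simp only [hSt, hS, hS', coeff_mk, coeff_rescale]
    rw [hst n]
    apply Finset.sum_congr rfl
    intro j _
    ring
  -- key identities
  have K1 : ∀ ν, ∑ j ∈ Finset.range (ν + 1), ((-1 : B) ^ j * c' j) * st (ν - j) = s ν := by
    intro ν
    have h : rescale (-1 : B) C' * St = S := by
      rw [hStm]
      calc rescale (-1 : B) C' * (S * rescale (-1) S')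
          = S * (rescale (-1 : B) C' * rescale (-1) S') := by ring
        _ = S * rescale (-1 : B) (C' * S') := by rw [map_mul]
        _ = S := by rw [hCS', map_one, mul_one]
    have := congrArg (PowerSeries.coeff ν) h
    rw [PowerSeries.coeff_mul, Finset.Nat.sum_antidiagonal_eq_sum_range_succ_mk] at this
    simpa [coeff_rescale, hC', hSt, hS, coeff_mk, mul_assoc] using this
  have K2 : ∀ ν, ∑ j ∈ Finset.range (ν + 1), c j * st (ν - j) = (-1 : B) ^ ν * s' ν := by
    intro ν
    have h : C * St = rescale (-1 : B) S' := by
      rw [hStm, ← mul_assoc, hCS, one_mul]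
    have := congrArg (PowerSeries.coeff ν) h
    rw [PowerSeries.coeff_mul, Finset.Nat.sum_antidiagonal_eq_sum_range_succ_mk] at this
    simpa [coeff_rescale, hC, hSt, hS', coeff_mk] using this
  -- abbreviations
  have ha : (-1 : B) ^ r * (-1 : B) ^ r = 1 := by
    rw [← pow_add, ← two_mul, pow_mul]; norm_num
  -- main strong induction
  intro ν
  induction ν using Nat.strong_induction_on with
  | _ ν IH =>
    rcases Nat.eq_zero_or_pos ν with h0 | hν
    · subst h0
      simp only [hW0, hW'0, hst0, pow_one, mul_one]
      linear_combination hff'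
    · -- sums over Icc 1 ν
      have E1 : ∑ j ∈ Finset.Icc 1 ν, ((-1 : B) ^ j * c' j) * st (ν - j) = s ν - st ν := by
        have := K1 ν
        rw [range_split] at this
        simp only [pow_zero, hc'0, one_mul, Nat.sub_zero] at this
        linear_combination this
      have E2 : ∑ j ∈ Finset.Icc 1 ν, c j * st (ν - j) = (-1 : B) ^ ν * s' ν - st ν := by
        have := K2 ν
        rw [range_split] at this
        simp only [hc0, one_mul, Nat.sub_zero] at this
        linear_combination this
      have hsum : (∑ j ∈ Finset.Icc 1 ν,
            W (ν - j) * ((-1 : B) ^ r * c j * f - (-1 : B) ^ (r + j) * c' j * f - c j))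
          + (-1 : B) ^ ν * (∑ j ∈ Finset.Icc 1 ν,
            W' (ν - j) * ((-1 : B) ^ r * c' j * f' - (-1 : B) ^ (r + j) * c j * f' - c' j))
          = (-1 : B) ^ r * (∑ j ∈ Finset.Icc 1 ν,
            st (ν - j) * ((-1 : B) ^ r * c j * f - (-1 : B) ^ (r + j) * c' j * f - c j)) := by
        rw [Finset.mul_sum, Finset.mul_sum, ← Finset.sum_add_distrib]
        apply Finset.sum_congr rfl
        intro j hj
        obtain ⟨hj1, hj2⟩ := Finset.mem_Icc.mp hj
        have hm : (ν - j) + j = ν := Nat.sub_add_cancel hj2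
        have hIH := IH (ν - j) (by omega)
        set m := ν - j with hmdef
        have hpm : (-1 : B) ^ ν = (-1 : B) ^ m * (-1 : B) ^ j := by rw [← pow_add, hm]
        have hpm1 : (-1 : B) ^ (m + 1) = -(-1 : B) ^ m := by rw [pow_succ]; ring
        have hprj : (-1 : B) ^ (r + j) = (-1 : B) ^ r * (-1 : B) ^ j := by rw [pow_add]
        have hb : (-1 : B) ^ j * (-1 : B) ^ j = 1 := by
          rw [← pow_add, ← two_mul, pow_mul]; norm_num
        rw [hpm1] at hIH
        rw [hpm, hprj]
        set a := (-1 : B) ^ r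
        set b := (-1 : B) ^ j
        set e := (-1 : B) ^ m
        -- hIH : W m - (-e) * W' m = a * st m
        linear_combination (a * c j * f - a * b * c' j * f - c j) * hIH +
          (e * W' m * (a * b * c' j - a * c j)) * hff' +
          (e * W' m * (b * c' j - c j)) * ha +
          (- e * W' m * a * c j * f') * hb
      have hsum2 : (∑ j ∈ Finset.Icc 1 ν,
            st (ν - j) * ((-1 : B) ^ r * c j * f - (-1 : B) ^ (r + j) * c' j * f - c j))
          = (-1 : B) ^ r * f * ((-1 : B) ^ ν * s' ν - st ν)
            - (-1 : B) ^ r * f * (s ν - st ν) - ((-1 : B) ^ ν * s' ν - st ν) := by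
        rw [← E1, ← E2, Finset.mul_sum, Finset.mul_sum, ← Finset.sum_sub_distrib,
          ← Finset.sum_sub_distrib]
        apply Finset.sum_congr rfl
        intro j _
        rw [pow_add]
        ring
      rw [hW ν hν, hW' ν hν]
      have hp1 : (-1 : B) ^ (ν + 1) = -(-1 : B) ^ ν := by rw [pow_succ]; ring
      rw [hp1]
      rw [hsum2] at hsum
      linear_combination hsum + ((-1 : B) ^ ν * s' ν) * hff' +
        (f * ((-1 : B) ^ ν * s' ν - st ν) - f * (s ν - st ν)) * ha
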